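/- Let Π : ℕ × ℕ → ℝ satisfy: Π(1,2) = 1 and Π(r,2) = 0 for r ≠ 1; Π(0,N) = 0 for all N; and the recurrence Π(r, N+1) = (1/N)·Π(r-1, N) + (1 - 1/N)·Π(r, N) for all integers N ≥ 2 and r ≥ 1. Then for every integer N ≥ 2 and every real x, ∑_{r=1}^{N-1} Π(r,N)·x^r = x(x+1)(x+2)···(x+N-2)/(N-1)!, i.e., Π(r,N) equals the unsigned Stirling number of the first kind [N-1 brack r] divided by (N-1)!. -/

import Mathlib

/-- The distribution of the number of size-two edges in an RRH is given by unsigned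
Stirling numbers of the first kind: its generating polynomial equals the rising
factorial `x(x+1)⋯(x+N-2)/(N-1)!`. -/
theorem rrh_size_two_edges_stirling (Pr : ℕ × ℕ → ℝ)
    (hinit : Pr (1, 2) = 1) (hinit' : ∀ r : ℕ, r ≠ 1 → Pr (r, 2) = 0)
    (hzero : ∀ N : ℕ, Pr (0, N) = 0)
    (hrec : ∀ N : ℕ, 2 ≤ N → ∀ r : ℕ, 1 ≤ r →
      Pr (r, N + 1) = (1 / (N : ℝ)) * Pr (r - 1, N) + (1 - 1 / (N : ℝ)) * Pr (r, N)) :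
    ∀ N : ℕ, 2 ≤ N → ∀ x : ℝ,
      ∑ r ∈ Finset.Icc 1 (N - 1), Pr (r, N) * x ^ r
        = (∏ i ∈ Finset.range (N - 1), (x + (i : ℝ))) / ((N - 1).factorial : ℝ) := by
  have hvanish : ∀ N : ℕ, 2 ≤ N → ∀ r : ℕ, N ≤ r → Pr (r, N) = 0 := by
    intro N hN
    induction N, hN using Nat.le_induction with
    | base => intro r hr; exact hinit' r (by omega)
    | succ N hN ih =>
      intro r hr
      rw [hrec N hN r (by omega), ih (r - 1) (by omega), ih r (by omega)]
      ring
  intro N hN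
  induction N, hN using Nat.le_induction with
  | base =>
    intro x
    simp [hinit]
  | succ N hN ih =>
    intro x
    obtain ⟨M, rfl⟩ : ∃ M, N = M + 1 := ⟨N - 1, by omega⟩
    have hfac : ((M.factorial : ℝ)) ≠ 0 := Nat.cast_ne_zero.mpr M.factorial_ne_zero
    have hMp : ((M : ℝ) + 1) ≠ 0 := by positivity
    have key : ∀ r ∈ Finset.Icc 1 (M + 1),
        Pr (r, M + 1 + 1) * x ^ r
          = ((1 / ((M : ℝ) + 1)) * Pr (r - 1, M + 1)
              + (1 - 1 / ((M : ℝ) + 1)) * Pr (r, M + 1)) * x ^ r := by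
      intro r hr
      rw [Finset.mem_Icc] at hr
      rw [hrec (M + 1) hN r hr.1]
      push_cast
      ring
    have hIcc : ∀ f : ℕ → ℝ, ∑ r ∈ Finset.Icc 1 (M + 1), f r
        = ∑ i ∈ Finset.range (M + 1), f (1 + i) := by
      intro f
      rw [← Finset.Ico_add_one_right_eq_Icc, Finset.sum_Ico_eq_sum_range]
      simp
    have hIcc' : ∀ f : ℕ → ℝ, ∑ r ∈ Finset.Icc 1 M, f r
        = ∑ i ∈ Finset.range M, f (1 + i) := by
      intro f
      rw [← Finset.Ico_add_one_right_eq_Icc, Finset.sum_Ico_eq_sum_range]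
      simp
    have hT := ih x
    simp only [Nat.add_sub_cancel] at hT ⊢
    rw [Finset.sum_congr rfl key, hIcc, hIcc' (fun r => Pr (r, M + 1) * x ^ r)] at *
    set T := ∑ i ∈ Finset.range M, Pr (1 + i, M + 1) * x ^ (1 + i) with hTdef
    have split : ∑ i ∈ Finset.range (M + 1),
        ((1 / ((M : ℝ) + 1)) * Pr (1 + i - 1, M + 1)
          + (1 - 1 / ((M : ℝ) + 1)) * Pr (1 + i, M + 1)) * x ^ (1 + i)
        = (1 / ((M : ℝ) + 1)) * (∑ i ∈ Finset.range (M + 1), Pr (i, M + 1) * x ^ (1 + i))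
          + (1 - 1 / ((M : ℝ) + 1)) * (∑ i ∈ Finset.range (M + 1), Pr (1 + i, M + 1) * x ^ (1 + i)) := by
      rw [Finset.mul_sum, Finset.mul_sum, ← Finset.sum_add_distrib]
      refine Finset.sum_congr rfl fun i _ => ?_
      simp only [Nat.add_sub_cancel_left]
      ring
    rw [split]
    have s1 : ∑ i ∈ Finset.range (M + 1), Pr (i, M + 1) * x ^ (1 + i) = x * T := by
      rw [Finset.sum_range_succ']
      simp only [hzero, zero_mul, add_zero, hTdef, Finset.mul_sum]
      refine Finset.sum_congr rfl fun i _ => ?_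
      ring
    have s2 : ∑ i ∈ Finset.range (M + 1), Pr (1 + i, M + 1) * x ^ (1 + i) = T := by
      rw [Finset.sum_range_succ, hvanish (M + 1) hN (1 + M) (by omega)]
      simp
      exact hTdef.symm
    rw [s1, s2, hT, Finset.prod_range_succ, Nat.factorial_succ]
    push_cast
    field_simp
    ring
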